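/- Let V be a finite-dimensional complex vector space and let 𝔤 be a complex Lie subalgebra (a linear subspace suffices) of End_ℂ(V). Define the moment map μ : V × V* → 𝔤* by μ(v,f)(A) = f(A v) for A ∈ 𝔤. If there exists v₀ ∈ V whose infinitesimal stabilizer {A ∈ 𝔤 : A v₀ = 0} is the zero subspace (i.e. the action is locally free), then the set of points (v,f) ∈ V × V* at which the Fréchet derivative of μ is a surjective linear map onto 𝔤* is open and dense in V × V* (norm topology on the finite-dimensional space V × V*). -/

import Mathlib

set_option synthInstance.maxHeartbeats 1000000
set_option maxHeartbeats 2000000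


/-- The moment map `μ : V × V* → 𝔤*`, `μ(v,f)(A) = f(Av)`, of a linear
subspace `𝔤 ⊆ End_ℂ(V)` acting on a finite-dimensional complex vector
space `V`. -/
noncomputable def linearMomentMap (V : Type*) [NormedAddCommGroup V] [NormedSpace ℂ V]
    [FiniteDimensional ℂ V] (𝔤 : Submodule ℂ (V →L[ℂ] V))
    (p : V × StrongDual ℂ V) : StrongDual ℂ 𝔤 :=
  LinearMap.toContinuousLinearMap
    { toFun := fun A : 𝔤 => p.2 ((A : V →L[ℂ] V) p.1)
      map_add' := by intro A B; simp
      map_smul' := by intro c A; simp }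

open Function

namespace MomentMapAux

variable {V : Type*} [NormedAddCommGroup V] [NormedSpace ℂ V] [FiniteDimensional ℂ V]

noncomputable abbrev instNACG (𝔤 : Submodule ℂ (V →L[ℂ] V)) : NormedAddCommGroup 𝔤 :=
  Submodule.normedAddCommGroup 𝔤
noncomputable abbrev instNS (𝔤 : Submodule ℂ (V →L[ℂ] V)) : NormedSpace ℂ 𝔤 :=
  Submodule.normedSpace 𝔤
attribute [local instance] instNACG instNS

/-- The action map `𝔤 → V`, `A ↦ A v`, for a fixed `v`. -/
noncomputable def actMap (𝔤 : Submodule ℂ (V →L[ℂ] V)) (v : V) : 𝔤 →ₗ[ℂ] V where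
  toFun A := (A : V →L[ℂ] V) v
  map_add' A B := by simp
  map_smul' c A := by simp

@[simp] lemma actMap_apply (𝔤 : Submodule ℂ (V →L[ℂ] V)) (v : V) (A : 𝔤) :
    actMap 𝔤 v A = (A : V →L[ℂ] V) v := rfl

@[simp] lemma linearMomentMap_apply (𝔤 : Submodule ℂ (V →L[ℂ] V))
    (p : V × StrongDual ℂ V) (A : 𝔤) :
    linearMomentMap V 𝔤 p A = p.2 ((A : V →L[ℂ] V) p.1) := by
  simp [linearMomentMap]

/-- The moment map as a continuous bilinear map. -/
noncomputable def momentBil (𝔤 : Submodule ℂ (V →L[ℂ] V)) :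
    V →L[ℂ] StrongDual ℂ V →L[ℂ] StrongDual ℂ 𝔤 :=
  LinearMap.toContinuousLinearMap
    { toFun := fun v => LinearMap.toContinuousLinearMap
        { toFun := fun f => linearMomentMap V 𝔤 (v, f)
          map_add' := by intro f g; ext A; simp
          map_smul' := by intro c f; ext A; simp }
      map_add' := by intro v w; ext f A; simp
      map_smul' := by intro c v; ext f A; simp }

@[simp] lemma momentBil_apply (𝔤 : Submodule ℂ (V →L[ℂ] V)) (v : V)
    (f : StrongDual ℂ V) (A : 𝔤) :
    momentBil 𝔤 v f A = f ((A : V →L[ℂ] V) v) := by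
  simp [momentBil]

lemma linearMomentMap_eq (𝔤 : Submodule ℂ (V →L[ℂ] V)) :
    linearMomentMap V 𝔤 = fun p : V × StrongDual ℂ V => momentBil 𝔤 p.1 p.2 := by
  funext p; ext A; simp

lemma fderiv_linearMomentMap (𝔤 : Submodule ℂ (V →L[ℂ] V)) (p : V × StrongDual ℂ V) :
    fderiv ℂ (linearMomentMap V 𝔤) p = (momentBil 𝔤).isBoundedBilinearMap.deriv p := by
  rw [linearMomentMap_eq]
  exact (momentBil 𝔤).isBoundedBilinearMap.fderiv p

/-- At a point whose first component has injective action map, the derivative of the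
moment map is surjective. -/
lemma surjective_fderiv_of_injective (𝔤 : Submodule ℂ (V →L[ℂ] V))
    (p : V × StrongDual ℂ V) (h : Injective (actMap 𝔤 p.1)) :
    Surjective (fderiv ℂ (linearMomentMap V 𝔤) p) := by
  rw [fderiv_linearMomentMap]
  intro φ
  obtain ⟨g₀, hg₀⟩ := LinearMap.dualMap_surjective_of_injective h
    (φ : 𝔤 →ₗ[ℂ] ℂ)
  refine ⟨(0, LinearMap.toContinuousLinearMap g₀), ?_⟩
  ext A
  have h1 : g₀ ((A : V →L[ℂ] V) p.1) = φ A := by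
    have := congrArg (fun ψ => ψ A) hg₀
    simpa using this
  simp [IsBoundedBilinearMap.deriv_apply, h1]

/-- Openness of the set of points with surjective derivative. -/
lemma isOpen_surjective_set (𝔤 : Submodule ℂ (V →L[ℂ] V)) :
    IsOpen { p : V × StrongDual ℂ V |
        Surjective (fderiv ℂ (linearMomentMap V 𝔤) p) } := by
  letI instNR : NormedRing (StrongDual ℂ 𝔤 →L[ℂ] StrongDual ℂ 𝔤) :=
    ContinuousLinearMap.toNormedRing (𝕜 := ℂ) (E := StrongDual ℂ 𝔤)
  set D : V × StrongDual ℂ V → (V × StrongDual ℂ V →L[ℂ] StrongDual ℂ 𝔤) :=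
    fun p => (momentBil 𝔤).isBoundedBilinearMap.deriv p with hDdef
  have hDcont : Continuous D :=
    (momentBil 𝔤).isBoundedBilinearMap.isBoundedLinearMap_deriv.continuous
  rw [isOpen_iff_mem_nhds]
  intro p hp
  rw [Set.mem_setOf_eq, fderiv_linearMomentMap] at hp
  have hp' : Surjective (D p : V × StrongDual ℂ V →ₗ[ℂ] StrongDual ℂ 𝔤) := hp
  obtain ⟨σ₀, hσ₀⟩ := ((D p : V × StrongDual ℂ V →ₗ[ℂ] StrongDual ℂ 𝔤)).exists_rightInverse_of_surjective
    ((LinearMap.range_eq_top (f := (D p : V × StrongDual ℂ V →ₗ[ℂ] StrongDual ℂ 𝔤))).mpr hp')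
  set σ := LinearMap.toContinuousLinearMap σ₀ with hσdef
  have hFcont : Continuous fun q => (D q).comp σ := by
    exact (((ContinuousLinearMap.compL ℂ (StrongDual ℂ 𝔤)
      (V × StrongDual ℂ V) (StrongDual ℂ 𝔤)).flip σ).continuous).comp hDcont
  have hUnits : IsOpen { T : StrongDual ℂ 𝔤 →L[ℂ] StrongDual ℂ 𝔤 | IsUnit T } := by
    exact Units.isOpen (R := StrongDual ℂ 𝔤 →L[ℂ] StrongDual ℂ 𝔤)
  have hU : IsOpen ((fun q => (D q).comp σ) ⁻¹'
      { T : StrongDual ℂ 𝔤 →L[ℂ] StrongDual ℂ 𝔤 | IsUnit T }) :=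
    hUnits.preimage hFcont
  have hpU : p ∈ (fun q => (D q).comp σ) ⁻¹'
      { T : StrongDual ℂ 𝔤 →L[ℂ] StrongDual ℂ 𝔤 | IsUnit T } := by
    have h1 : (D p).comp σ = 1 := by
      ext x : 1
      have := congrArg (fun ψ => ψ x) hσ₀
      simpa [σ] using this
    simp [Set.mem_preimage, h1]
  refine Filter.mem_of_superset (hU.mem_nhds hpU) ?_
  intro q hq
  rw [Set.mem_preimage, Set.mem_setOf_eq] at hq
  obtain ⟨u, hu⟩ := hq
  have hsurj : Surjective ⇑((D q).comp σ) := by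
    intro y
    refine ⟨(↑u⁻¹ : StrongDual ℂ 𝔤 →L[ℂ] StrongDual ℂ 𝔤) y, ?_⟩
    rw [← hu, ← ContinuousLinearMap.mul_apply, u.mul_inv, ContinuousLinearMap.one_apply]
  rw [Set.mem_setOf_eq, fderiv_linearMomentMap]
  rw [ContinuousLinearMap.coe_comp'] at hsurj
  exact hsurj.of_comp

/-- Density of the set of vectors with injective action map, given local freeness. -/
lemma dense_injective_set (𝔤 : Submodule ℂ (V →L[ℂ] V))
    (hfree : ∃ v₀ : V, ∀ A : 𝔤, (A : V →L[ℂ] V) v₀ = 0 → A = 0) :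
    Dense { v : V | Injective (actMap 𝔤 v) } := by
  obtain ⟨v₀, hv₀⟩ := hfree
  have hinj0 : Injective (actMap 𝔤 v₀) :=
    (injective_iff_map_eq_zero (actMap 𝔤 v₀)).mpr hv₀
  obtain ⟨π, hπ⟩ := (actMap 𝔤 v₀).exists_leftInverse_of_injective
    (LinearMap.ker_eq_bot.mpr hinj0)
  rw [Metric.dense_iff]
  intro v r hr
  set E : Module.End ℂ 𝔤 := π ∘ₗ actMap 𝔤 v with hEdef
  have hbad : Set.Finite { t : ℂ | E.HasEigenvalue (-t) } := by
    have : { t : ℂ | E.HasEigenvalue (-t) } = Neg.neg ⁻¹' (E.HasEigenvalue) := rfl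
    rw [this]
    exact Set.Finite.preimage (Set.injOn_of_injective neg_injective)
      E.finite_hasEigenvalue
  have hdense : Dense { t : ℂ | E.HasEigenvalue (-t) }ᶜ :=
    Set.Countable.dense_compl ℂ hbad.countable
  have hε : 0 < r / (‖v₀‖ + 1) := by positivity
  obtain ⟨t, htball, htgood⟩ := hdense.inter_open_nonempty (Metric.ball 0 (r / (‖v₀‖ + 1)))
    Metric.isOpen_ball ⟨0, Metric.mem_ball_self hε⟩
  refine ⟨v + t • v₀, ?_, ?_⟩
  · rw [Metric.mem_ball, dist_eq_norm]
    have h1 : v + t • v₀ - v = t • v₀ := by abel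
    rw [h1, norm_smul]
    have ht : ‖t‖ < r / (‖v₀‖ + 1) := by
      simpa [dist_eq_norm] using htball
    have h2 : ‖t‖ * ‖v₀‖ ≤ ‖t‖ * (‖v₀‖ + 1) := by
      have := norm_nonneg t
      nlinarith [norm_nonneg v₀]
    have h3 : ‖t‖ * (‖v₀‖ + 1) < r := by
      have h := mul_lt_mul_of_pos_right ht (by positivity : (0:ℝ) < ‖v₀‖ + 1)
      rwa [div_mul_cancel₀ _ (by positivity : (0:ℝ) < ‖v₀‖ + 1).ne'] at h
    linarith
  · rw [Set.mem_setOf_eq]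
    rw [injective_iff_map_eq_zero]
    intro A hA
    by_contra hA0
    have hval : (A : V →L[ℂ] V) (v + t • v₀) = 0 := hA
    have hsum : (A : V →L[ℂ] V) v + t • (A : V →L[ℂ] V) v₀ = 0 := by
      rw [← map_smul, ← map_add]
      simpa using hval
    have hπv₀ : π (actMap 𝔤 v₀ A) = A := by
      have := congrArg (fun ψ => ψ A) hπ
      simpa using this
    have hE : E A = (-t) • A := by
      have := congrArg π hsum
      simp only [map_add, map_smul, map_zero] at this
      have h4 : π ((A : V →L[ℂ] V) v) = E A := rfl
      have h5 : π ((A : V →L[ℂ] V) v₀) = A := hπv₀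
      rw [h4, h5] at this
      have h7 : E A = -(t • A) := eq_neg_of_add_eq_zero_left this
      exact h7.trans (neg_smul t A).symm
    have heig : E.HasEigenvalue (-t) :=
      Module.End.hasEigenvalue_of_hasEigenvector
        ⟨Module.End.mem_eigenspace_iff.mpr hE, hA0⟩
    exact htgood heig

end MomentMapAux

/-- Lemma 2.1(1): if some `v₀ ∈ V` has zero infinitesimal stabilizer in `𝔤`
(the action is locally free), then the set of points where the derivative of
the moment map `μ` is surjective onto `𝔤*` is open and dense in `V × V*`. -/
theorem momentMap_surjective_deriv_openDense (V : Type*) [NormedAddCommGroup V]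
    [NormedSpace ℂ V] [FiniteDimensional ℂ V] (𝔤 : Submodule ℂ (V →L[ℂ] V))
    (hfree : ∃ v₀ : V, ∀ A : 𝔤, (A : V →L[ℂ] V) v₀ = 0 → A = 0) :
    IsOpen { p : V × StrongDual ℂ V |
        Function.Surjective (fderiv ℂ (linearMomentMap V 𝔤) p) } ∧
    Dense { p : V × StrongDual ℂ V |
        Function.Surjective (fderiv ℂ (linearMomentMap V 𝔤) p) } := by
  constructor
  · exact MomentMapAux.isOpen_surjective_set 𝔤
  · have hgood := MomentMapAux.dense_injective_set 𝔤 hfree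
    have hsub : ({ v : V | Function.Injective (MomentMapAux.actMap 𝔤 v) } ×ˢ
        (Set.univ : Set (StrongDual ℂ V))) ⊆
        { p : V × StrongDual ℂ V |
          Function.Surjective (fderiv ℂ (linearMomentMap V 𝔤) p) } :=
      fun p hp => MomentMapAux.surjective_fderiv_of_injective 𝔤 p hp.1
    exact (hgood.prod dense_univ).mono hsub
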